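/- Let a < b be reals and γ ≥ δ > 0 with a + γ ≤ b − γ. Then for every real x, (1/π)·∫_{a+γ}^{b−γ} Im(1/(x − λ − iδ)) dλ ≤ 1_{[a,b]}(x) + δ/(πγ). -/

import Mathlib

open intervalIntegral

lemma arctan_le_self' {t : ℝ} (ht : 0 ≤ t) : Real.arctan t ≤ t := by
  have h1 : Real.arctan t ≤ Real.tan (Real.arctan t) :=
    Real.le_tan (by rw [← Real.arctan_zero]; exact Real.arctan_strictMono.monotone ht)
      (Real.arctan_lt_pi_div_two t)
  rwa [Real.tan_arctan] at h1

/-- For `a < b`, `γ ≥ δ > 0` with `a + γ ≤ b - γ`, and every real `x`,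
`(1/π) ∫_{a+γ}^{b-γ} Im (1/(x - λ - iδ)) dλ ≤ 1_{[a,b]}(x) + δ/(πγ)`. -/
theorem stmt5 (a b γ δ : ℝ) (hab : a < b) (hδ : 0 < δ) (hγδ : δ ≤ γ)
    (h : a + γ ≤ b - γ) (x : ℝ) :
    (1 / Real.pi) * ∫ lam in (a + γ)..(b - γ), (((x : ℂ) - lam - δ * Complex.I)⁻¹).im ≤
      Set.indicator (Set.Icc a b) (fun _ => (1 : ℝ)) x + δ / (Real.pi * γ) := by
  have hπ : (0:ℝ) < Real.pi := Real.pi_pos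
  have hγ : (0:ℝ) < γ := lt_of_lt_of_le hδ hγδ
  -- rewrite integrand
  have hint : ∀ lam : ℝ, (((x : ℂ) - lam - δ * Complex.I)⁻¹).im = δ / ((x - lam)^2 + δ^2) := by
    intro lam
    simp [Complex.inv_im, Complex.normSq_apply]
    ring_nf
  -- antiderivative
  have hderiv : ∀ lam : ℝ, HasDerivAt (fun l => -Real.arctan ((x - l)/δ))
      (δ / ((x - lam)^2 + δ^2)) lam := by
    intro lam
    have h1 : HasDerivAt (fun l : ℝ => (x - l)/δ) (-1/δ) lam := by
      simpa using ((hasDerivAt_id lam).const_sub x).div_const δ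
    have h2 := (Real.hasDerivAt_arctan ((x - lam)/δ)).comp lam h1
    have h3 := h2.neg
    refine h3.congr_deriv ?_
    have hd : ((x - lam)^2 + δ^2) ≠ 0 := by positivity
    have hδ0 : δ ≠ 0 := hδ.ne'
    field_simp
    ring
  have hcont : Continuous fun lam : ℝ => δ / ((x - lam)^2 + δ^2) := by
    apply continuous_const.div (by continuity)
    intro l; positivity
  have hIeq : ∫ lam in (a + γ)..(b - γ), (((x : ℂ) - lam - δ * Complex.I)⁻¹).im
      = Real.arctan ((x - (a + γ))/δ) - Real.arctan ((x - (b - γ))/δ) := by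
    rw [intervalIntegral.integral_congr (g := fun lam => δ / ((x - lam)^2 + δ^2))
      (fun lam _ => hint lam)]
    rw [intervalIntegral.integral_eq_sub_of_hasDerivAt (fun lam _ => hderiv lam)
      (hcont.intervalIntegrable _ _)]
    ring
  rw [hIeq]
  set u := (x - (a + γ))/δ with hu
  set v := (x - (b - γ))/δ with hv
  rcases le_or_gt a x with hax | hax
  · rcases le_or_gt x b with hxb | hxb
    · -- x ∈ [a,b]
      rw [Set.indicator_of_mem (Set.mem_Icc.mpr ⟨hax, hxb⟩)]
      have h1 : Real.arctan u - Real.arctan v ≤ Real.pi := by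
        have := Real.arctan_lt_pi_div_two u
        have := Real.neg_pi_div_two_lt_arctan v
        linarith
      have h2 : (0:ℝ) ≤ δ / (Real.pi * γ) := by positivity
      have : (1 / Real.pi) * (Real.arctan u - Real.arctan v) ≤ 1 := by
        rw [div_mul_eq_mul_div, one_mul, div_le_one hπ]; exact h1
      linarith
    · -- x > b
      rw [Set.indicator_of_notMem (by simp only [Set.mem_Icc, not_and, not_le]; intro _; exact hxb)]
      have hv1 : (1:ℝ) ≤ v := by
        rw [hv, le_div_iff₀ hδ]; nlinarith
      have hv0 : (0:ℝ) < v := lt_of_lt_of_le one_pos hv1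
      have key : Real.arctan u - Real.arctan v ≤ δ/γ := by
        have h1 : Real.arctan u < Real.pi/2 := Real.arctan_lt_pi_div_two u
        have h2 : Real.pi/2 - Real.arctan v = Real.arctan v⁻¹ := by
          rw [Real.arctan_inv_of_pos hv0]
        have h3 : Real.arctan v⁻¹ ≤ v⁻¹ := arctan_le_self' (by positivity)
        have h4 : v⁻¹ ≤ δ/γ := by
          have hgd : γ/δ ≤ v := by rw [hv, div_le_div_iff₀ hδ hδ]; nlinarith
          have := inv_anti₀ (by positivity : (0:ℝ) < γ/δ) hgd
          calc v⁻¹ ≤ (γ/δ)⁻¹ := this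
            _ = δ/γ := by rw [inv_div]
        linarith
      have : (1 / Real.pi) * (Real.arctan u - Real.arctan v) ≤ (1/Real.pi) * (δ/γ) := by
        apply mul_le_mul_of_nonneg_left key (by positivity)
      have heq : (1/Real.pi) * (δ/γ) = δ/(Real.pi * γ) := by field_simp
      linarith [heq ▸ this]
  · -- x < a
    rw [Set.indicator_of_notMem (by simp only [Set.mem_Icc, not_and, not_le]; intro h'; linarith)]
    have hu1 : u ≤ -1 := by
      rw [hu, div_le_iff₀ hδ]; nlinarith
    have hu0 : u < 0 := lt_of_le_of_lt hu1 (by norm_num)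
    have key : Real.arctan u - Real.arctan v ≤ δ/γ := by
      have h1 : -(Real.pi/2) < Real.arctan v := Real.neg_pi_div_two_lt_arctan v
      have h2 : Real.arctan u + Real.pi/2 = -Real.arctan u⁻¹ := by
        rw [Real.arctan_inv_of_neg hu0]; ring
      have h3 : Real.arctan (-u)⁻¹ ≤ (-u)⁻¹ := arctan_le_self' (inv_nonneg.mpr (by linarith))
      rw [show (-u)⁻¹ = -u⁻¹ by rw [inv_neg]] at h3
      rw [Real.arctan_neg] at h3
      have h4 : -u⁻¹ ≤ δ/γ := by
        have hneg : -u = (a + γ - x)/δ := by rw [hu]; ring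
        have hgd : γ/δ ≤ -u := by rw [hneg, div_le_div_iff₀ hδ hδ]; nlinarith
        have := inv_anti₀ (by positivity : (0:ℝ) < γ/δ) hgd
        calc -u⁻¹ = (-u)⁻¹ := by rw [inv_neg]
          _ ≤ (γ/δ)⁻¹ := this
          _ = δ/γ := by rw [inv_div]
      linarith
    have : (1 / Real.pi) * (Real.arctan u - Real.arctan v) ≤ (1/Real.pi) * (δ/γ) := by
      apply mul_le_mul_of_nonneg_left key (by positivity)
    have heq : (1/Real.pi) * (δ/γ) = δ/(Real.pi * γ) := by field_simp
    linarith [heq ▸ this]
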